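/- Let Σ be the free monoid on a nonempty finite or countable alphabet W, μ a probability measure on Σ, and w ∈ Σ a nonempty word with μ(w) > 0. Let μ_w be the first return measure, i.e., the law of x_{τ_w} = g_1⋯g_{τ_w} where (g_n) are i.i.d. with law μ and τ_w = min{n ≥ 1 : g_n = w}. Then the hitting measures on W^ℕ of the random walks (Σ, μ) and (Σ, μ_w) coincide: Φ_*(μ^ℕ) = Φ_*((μ_w)^ℕ). -/

import Mathlib

open MeasureTheory ProbabilityTheory

namespace Stmt15
set_option linter.unusedSectionVars false

noncomputable instance {W : Type*} : MeasurableSpace (FreeMonoid W) := ⊤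

/-- The position of the random walk at time `n`: the product of the first `n` increments. -/
def pos {W Ω : Type*} (g : ℕ → Ω → FreeMonoid W) (n : ℕ) (ω : Ω) : FreeMonoid W :=
  ((List.range n).map (fun i => g i ω)).prod

/-- The finite word `v` is a prefix of the infinite word `ξ`. -/
def IsPrefixOf {W : Type*} (v : FreeMonoid W) (ξ : ℕ → W) : Prop :=
  ∀ i : Fin (FreeMonoid.toList v).length, (FreeMonoid.toList v).get i = ξ i

section Core
variable {W : Type*}

instance [Countable W] : Countable (FreeMonoid W) :=
  Countable.of_equiv (List W) FreeMonoid.toList.symm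

instance : MeasurableSingletonClass (FreeMonoid W) :=
  ⟨fun _ => MeasurableSpace.measurableSet_top⟩

lemma msFM (s : Set (FreeMonoid W)) : MeasurableSet s := MeasurableSpace.measurableSet_top

lemma toList_ne_nil {w : FreeMonoid W} (hw1 : w ≠ 1) : FreeMonoid.toList w ≠ [] :=
  fun h => hw1 (FreeMonoid.toList.injective (h.trans FreeMonoid.toList_one.symm))

/-! ### words and the boundary letter map -/

def word (s : ℕ → FreeMonoid W) (n : ℕ) : List W :=
  FreeMonoid.toList (((List.range n).map s).prod)

lemma word_succ (s : ℕ → FreeMonoid W) (n : ℕ) :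
    word s (n+1) = word s n ++ FreeMonoid.toList (s n) := by
  simp [word, List.range_succ]

def seg (j d : ℕ) (s : ℕ → FreeMonoid W) : List (FreeMonoid W) :=
  (List.range d).map fun i => s (j + i)

@[simp] lemma seg_length (j d : ℕ) (s : ℕ → FreeMonoid W) : (seg j d s).length = d := by
  simp [seg]

lemma seg_getElem (j d : ℕ) (s : ℕ → FreeMonoid W) (i : ℕ) (h : i < d) :
    (seg j d s)[i]'(by simpa using h) = s (j + i) := by
  simp [seg]

lemma word_add (s : ℕ → FreeMonoid W) (a d : ℕ) :
    word s (a + d) = word s a ++ FreeMonoid.toList ((seg a d s).prod) := by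
  induction d with
  | zero => simp [seg]
  | succ d ih =>
    rw [show a + (d+1) = (a+d)+1 from rfl, word_succ, ih]
    have : seg a (d+1) s = seg a d s ++ [s (a+d)] := by
      simp [seg, List.range_succ]
    rw [this, List.prod_append, List.prod_cons, List.prod_nil, mul_one,
      FreeMonoid.toList_mul, List.append_assoc]

lemma word_prefix (s : ℕ → FreeMonoid W) {n m : ℕ} (h : n ≤ m) : word s n <+: word s m := by
  obtain ⟨d, rfl⟩ := Nat.exists_eq_add_of_le h
  rw [word_add]
  exact List.prefix_append _ _

open scoped Classical in
noncomputable def F [Nonempty W] (s : ℕ → FreeMonoid W) (k : ℕ) : W :=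
  if h : ∃ n, k < (word s n).length then (word s (Nat.find h))[k]'(Nat.find_spec h)
  else Classical.arbitrary W

lemma F_eq [Nonempty W] {s : ℕ → FreeMonoid W} {k n : ℕ} (h : k < (word s n).length) :
    F s k = (word s n)[k] := by
  have hex : ∃ n, k < (word s n).length := ⟨n, h⟩
  rw [F, dif_pos hex]
  rcases le_total (Nat.find hex) n with hle | hle
  · exact List.IsPrefix.getElem (word_prefix s hle) (Nat.find_spec hex)
  · exact (List.IsPrefix.getElem (word_prefix s hle) h).symm

lemma eq_F_of_prefixes [Nonempty W] {s : ℕ → FreeMonoid W} {φ : ℕ → W}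
    (hlen : ∀ k, ∃ n, k < (word s n).length)
    (hpre : ∀ n, ∀ i, (h : i < (word s n).length) → (word s n)[i] = φ i) : φ = F s := by
  funext k
  obtain ⟨n, hn⟩ := hlen k
  rw [F_eq hn]
  exact (hpre n k hn).symm

lemma F_eq_F [Nonempty W] {s1 s2 : ℕ → FreeMonoid W}
    (h12 : ∀ n, ∃ n', word s1 n = word s2 n')
    (hlen : ∀ k, ∃ n, k < (word s1 n).length) : F s1 = F s2 := by
  funext k
  obtain ⟨n, hn⟩ := hlen k
  obtain ⟨n', he⟩ := h12 n
  have hn' : k < (word s2 n').length := he ▸ hn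
  rw [F_eq hn, F_eq hn']
  simp only [he]

/-! ### block decomposition machinery -/

noncomputable def nxt (w : FreeMonoid W) (j : ℕ) (s : ℕ → FreeMonoid W) : ℕ :=
  sInf {n | j ≤ n ∧ s n = w} + 1

noncomputable def sgF (w : FreeMonoid W) (j : ℕ) : ℕ → (ℕ → FreeMonoid W) → ℕ
  | 0, _ => j
  | k+1, s => nxt w (sgF w j k s) s

@[simp] lemma sgF_zero (w : FreeMonoid W) (j : ℕ) (s : ℕ → FreeMonoid W) : sgF w j 0 s = j := rfl

lemma sgF_succ (w : FreeMonoid W) (j k : ℕ) (s : ℕ → FreeMonoid W) :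
    sgF w j (k+1) s = nxt w (sgF w j k s) s := rfl

noncomputable def blkF (w : FreeMonoid W) (k : ℕ) (s : ℕ → FreeMonoid W) : FreeMonoid W :=
  (seg (sgF w 0 k s) (sgF w 0 (k+1) s - sgF w 0 k s) s).prod

def Good (w : FreeMonoid W) (s : ℕ → FreeMonoid W) : Prop := ∀ m, ∃ n, m ≤ n ∧ s n = w

def MatchAt (j : ℕ) (L : List (FreeMonoid W)) (s : ℕ → FreeMonoid W) : Prop :=
  ∀ i, (h : i < L.length) → s (j + i) = L[i]

def cat {m : ℕ} (t : Fin m → List (FreeMonoid W)) : List (FreeMonoid W) := (List.ofFn t).flatten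

lemma sgF_succ_eq (w : FreeMonoid W) (j : ℕ) (k : ℕ) (s : ℕ → FreeMonoid W) :
    sgF w j (k+1) s = sgF w (nxt w j s) k s := by
  induction k with
  | zero => rfl
  | succ k ih =>
    rw [sgF_succ, ih, ← sgF_succ]

lemma lt_nxt {w : FreeMonoid W} {s : ℕ → FreeMonoid W} (hg : Good w s) (j : ℕ) :
    j < nxt w j s := by
  have hne : {n | j ≤ n ∧ s n = w}.Nonempty := by
    obtain ⟨n, hn, h⟩ := hg j; exact ⟨n, hn, h⟩
  have := (Nat.sInf_mem hne).1
  unfold nxt; omega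

lemma le_sgF {w : FreeMonoid W} {s : ℕ → FreeMonoid W} (hg : Good w s) (j k : ℕ) :
    j ≤ sgF w j k s := by
  induction k with
  | zero => exact le_rfl
  | succ k ih => exact ih.trans (lt_nxt hg (sgF w j k s)).le

lemma sgF_lt_succ {w : FreeMonoid W} {s : ℕ → FreeMonoid W} (hg : Good w s) (j k : ℕ) :
    sgF w j k s < sgF w j (k+1) s := lt_nxt hg _

lemma idx_le_sgF {w : FreeMonoid W} {s : ℕ → FreeMonoid W} (hg : Good w s) (j k : ℕ) :
    k ≤ sgF w j k s := by
  induction k with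
  | zero => exact Nat.zero_le _
  | succ k ih => have := sgF_lt_succ hg j k; omega

lemma matchAt_seg (j d : ℕ) (s : ℕ → FreeMonoid W) : MatchAt j (seg j d s) s := by
  intro i h
  rw [seg_getElem j d s i (by simpa using h)]

lemma seg_append (j d1 d2 : ℕ) (s : ℕ → FreeMonoid W) :
    seg j d1 s ++ seg (j + d1) d2 s = seg j (d1 + d2) s := by
  apply List.ext_getElem (by simp)
  intro i h1 h2
  by_cases hc : i < d1
  · rw [List.getElem_append_left (by simpa using hc)]
    rw [seg_getElem _ _ _ _ hc, seg_getElem _ _ _ _ (by simpa using h2)]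
  · rw [List.getElem_append_right (by simpa using hc)]
    have hi : i - d1 < d2 := by simp at h2; omega
    rw [seg_getElem _ _ _ _ (by simpa using hi), seg_getElem _ _ _ _ (by simpa using h2)]
    congr 1
    simp
    omega

lemma matchAt_append {j : ℕ} {L1 L2 : List (FreeMonoid W)} {s : ℕ → FreeMonoid W} :
    MatchAt j (L1 ++ L2) s ↔ MatchAt j L1 s ∧ MatchAt (j + L1.length) L2 s := by
  constructor
  · intro h
    constructor
    · intro i hi
      have := h i (by simp; omega)
      rwa [List.getElem_append_left hi] at this
    · intro i hi
      have := h (L1.length + i) (by simp; omega)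
      rw [List.getElem_append_right (by omega)] at this
      simpa [Nat.add_assoc, Nat.add_sub_cancel_left] using this
  · rintro ⟨h1, h2⟩ i hi
    by_cases hc : i < L1.length
    · rw [List.getElem_append_left hc]; exact h1 i hc
    · rw [List.getElem_append_right (by omega)]
      have hi2 : i - L1.length < L2.length := by simp at hi; omega
      have := h2 (i - L1.length) hi2
      rw [show j + L1.length + (i - L1.length) = j + i by omega] at this
      exact this

lemma key1 {w : FreeMonoid W} {s : ℕ → FreeMonoid W} {t : List (FreeMonoid W)} {j : ℕ}
    (ht0 : t ≠ []) (hmid : ∀ u ∈ t.dropLast, u ≠ w) (hlast : t.getLast? = some w)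
    (hm : MatchAt j t s) : nxt w j s = j + t.length ∧ seg j t.length s = t := by
  have hlen : 0 < t.length := List.length_pos_iff.mpr ht0
  have hseg : seg j t.length s = t := by
    apply List.ext_getElem (by simp)
    intro i h1 h2
    rw [seg_getElem _ _ _ _ (by simpa using h1)]
    exact hm i h2
  refine ⟨?_, hseg⟩
  have hlastw : t[t.length - 1]'(by omega) = w := by
    rw [List.getLast?_eq_getLast ht0] at hlast
    rw [← List.getLast_eq_getElem ht0]
    exact Option.some_injective _ hlast
  have hmem : j + (t.length - 1) ∈ {n | j ≤ n ∧ s n = w} := by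
    refine ⟨by omega, ?_⟩
    rw [hm (t.length - 1) (by omega)]
    exact hlastw
  have hlb : ∀ n ∈ {n | j ≤ n ∧ s n = w}, j + (t.length - 1) ≤ n := by
    rintro n ⟨hn1, hn2⟩
    by_contra hc
    push_neg at hc
    have hi : n - j < t.length - 1 := by omega
    have hd : t[n - j]'(by omega) ∈ t.dropLast := by
      have : t.dropLast[n - j]'(by rw [List.length_dropLast]; omega) = t[n - j]'(by omega) :=
        List.getElem_dropLast (by rw [List.length_dropLast]; omega)
      rw [← this]
      exact List.getElem_mem _
    have := hmid _ hd
    apply this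
    rw [← hm (n - j) (by omega), show j + (n - j) = n by omega]
    exact hn2
  have hinf : sInf {n | j ≤ n ∧ s n = w} = j + (t.length - 1) :=
    le_antisymm (Nat.sInf_le hmem) (le_csInf ⟨_, hmem⟩ hlb)
  unfold nxt
  omega

lemma key2 {w : FreeMonoid W} {s : ℕ → FreeMonoid W} {j : ℕ} (hg : Good w s) :
    seg j (nxt w j s - j) s ≠ [] ∧ (∀ u ∈ (seg j (nxt w j s - j) s).dropLast, u ≠ w) ∧
      (seg j (nxt w j s - j) s).getLast? = some w := by
  have hne : {n | j ≤ n ∧ s n = w}.Nonempty := by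
    obtain ⟨n, hn, h⟩ := hg j; exact ⟨n, hn, h⟩
  obtain ⟨hji, hsi⟩ := Nat.sInf_mem hne
  set i0 := sInf {n | j ≤ n ∧ s n = w} with hi0
  have hd : nxt w j s - j = (i0 - j) + 1 := by unfold nxt; omega
  have hlen : (seg j (nxt w j s - j) s).length = (i0 - j) + 1 := by simp [hd]
  refine ⟨by intro h; rw [h] at hlen; simp at hlen, ?_, ?_⟩
  · intro u hu
    obtain ⟨i, hi, hig⟩ := List.mem_iff_getElem.mp hu
    have hi' : i < i0 - j := by rw [List.length_dropLast, hlen] at hi; omega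
    have : u = s (j + i) := by
      rw [← hig, List.getElem_dropLast, seg_getElem _ _ _ _ (by omega)]
    rw [this]
    intro hcon
    have : j + i ∈ {n | j ≤ n ∧ s n = w} := ⟨by omega, hcon⟩
    have := Nat.sInf_le this
    omega
  · have hne2 : seg j (nxt w j s - j) s ≠ [] := by intro h; rw [h] at hlen; simp at hlen
    rw [List.getLast?_eq_getElem?]
    rw [List.getElem?_eq_getElem (by omega)]
    have hidx : (seg j (nxt w j s - j) s).length - 1 = i0 - j := by omega
    have hval := seg_getElem j (nxt w j s - j) s (i0 - j) (by omega)
    rw [show j + (i0 - j) = i0 by omega, hsi] at hval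
    have hfin : (seg j (nxt w j s - j) s)[(seg j (nxt w j s - j) s).length - 1]'(by omega) = w := by
      simp only [hidx]
      exact hval
    exact congrArg some hfin

lemma back {w : FreeMonoid W} : ∀ (m j : ℕ) (s : ℕ → FreeMonoid W)
    (t : Fin m → List (FreeMonoid W)),
    (∀ k, t k ≠ [] ∧ (∀ u ∈ (t k).dropLast, u ≠ w) ∧ (t k).getLast? = some w) →
    MatchAt j (cat t) s →
    ∀ k : Fin m, sgF w j ((k : ℕ)+1) s = sgF w j (k : ℕ) s + (t k).length ∧
      seg (sgF w j (k : ℕ) s) ((t k).length) s = t k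
  | 0, j, s, t, ht, hm => fun k => k.elim0
  | (m+1), j, s, t, ht, hm => by
    have hcat : cat t = t 0 ++ cat (fun k : Fin m => t k.succ) := by
      rw [cat, List.ofFn_succ, List.flatten_cons]; rfl
    rw [hcat, matchAt_append] at hm
    obtain ⟨hm0, hm1⟩ := hm
    obtain ⟨h1, h2⟩ := key1 (ht 0).1 (ht 0).2.1 (ht 0).2.2 hm0
    have ih := back m (j + (t 0).length) s (fun k => t k.succ) (fun k => ht k.succ) hm1
    intro k
    have hs : ∀ k'' : ℕ, sgF w j (k''+1) s = sgF w (j + (t 0).length) k'' s := by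
      intro k''; rw [← h1]; exact sgF_succ_eq w j k'' s
    refine Fin.cases ?_ ?_ k
    · constructor
      · simpa [sgF] using h1
      · simpa [sgF] using h2
    · intro k'
      obtain ⟨iha, ihb⟩ := ih k'
      constructor
      · simp only [Fin.val_succ]
        rw [hs ((k' : ℕ)+1), hs (k' : ℕ)]
        exact iha
      · simp only [Fin.val_succ]
        rw [hs (k' : ℕ)]
        exact ihb

lemma cat_succ {m : ℕ} (t : Fin (m+1) → List (FreeMonoid W)) :
    cat t = t 0 ++ cat (fun k : Fin m => t k.succ) := by
  rw [cat, List.ofFn_succ, List.flatten_cons]; rfl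

lemma catseg {w : FreeMonoid W} : ∀ (m j : ℕ) (s : ℕ → FreeMonoid W), Good w s →
    cat (fun k : Fin m => seg (sgF w j (k : ℕ) s) (sgF w j ((k : ℕ)+1) s - sgF w j (k : ℕ) s) s)
      = seg j (sgF w j m s - j) s
  | 0, j, s, hg => by simp [cat, seg]
  | (m+1), j, s, hg => by
    have ih := catseg m (nxt w j s) s hg
    rw [cat_succ]
    simp only [Fin.val_succ, Fin.val_zero, sgF_zero, sgF_succ_eq w j]
    rw [ih]
    have hj : j < nxt w j s := lt_nxt hg j
    have hj2 : nxt w j s ≤ sgF w (nxt w j s) m s := le_sgF hg _ m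
    have happ := seg_append j (nxt w j s - j) (sgF w (nxt w j s) m s - nxt w j s) s
    rw [show j + (nxt w j s - j) = nxt w j s by omega] at happ
    rw [show (nxt w j s - j) + (sgF w (nxt w j s) m s - nxt w j s)
        = sgF w (nxt w j s) m s - j by omega] at happ
    exact happ

def DecP (w a : FreeMonoid W) (l : List (FreeMonoid W)) : Prop :=
  l ≠ [] ∧ (∀ u ∈ l.dropLast, u ≠ w) ∧ l.getLast? = some w ∧ l.prod = a

def Dec (w a : FreeMonoid W) : Type _ := {l : List (FreeMonoid W) // DecP w a l}

instance [Countable W] (w a : FreeMonoid W) : Countable (Dec w a) := by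
  unfold Dec; infer_instance

lemma forward {w : FreeMonoid W} (m : ℕ) (s : ℕ → FreeMonoid W) (hg : Good w s) :
    ∃ t : Fin m → List (FreeMonoid W),
      (∀ k : Fin m, DecP w (blkF w (k : ℕ) s) (t k)) ∧ MatchAt 0 (cat t) s := by
  refine ⟨fun k => seg (sgF w 0 (k : ℕ) s) (sgF w 0 ((k : ℕ)+1) s - sgF w 0 (k : ℕ) s) s,
    fun k => ?_, ?_⟩
  · have h := key2 (w := w) (s := s) (j := sgF w 0 (k : ℕ) s) hg
    rw [← sgF_succ] at h
    exact ⟨h.1, h.2.1, h.2.2, rfl⟩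
  · rw [catseg m 0 s hg]
    have := matchAt_seg 0 (sgF w 0 m s - 0) s
    simpa using this

lemma word_blkF {w : FreeMonoid W} {s : ℕ → FreeMonoid W} (hg : Good w s) (m : ℕ) :
    word (fun k => blkF w k s) m = word s (sgF w 0 m s) := by
  induction m with
  | zero => simp [word]
  | succ m ih =>
    rw [word_succ, ih]
    have hmono : sgF w 0 m s ≤ sgF w 0 (m+1) s := (sgF_lt_succ hg 0 m).le
    obtain ⟨d, hd⟩ := Nat.exists_eq_add_of_le hmono
    have hdd : sgF w 0 (m+1) s - sgF w 0 m s = d := by omega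
    rw [blkF, hdd, hd, word_add]

lemma len_word {w : FreeMonoid W} (hw1 : w ≠ 1) {s : ℕ → FreeMonoid W} (hg : Good w s) (k : ℕ) :
    ∃ n, k < (word s n).length := by
  have hwlen : 0 < (FreeMonoid.toList w).length := List.length_pos_iff.mpr (toList_ne_nil hw1)
  induction k with
  | zero =>
    obtain ⟨n, _, hn⟩ := hg 0
    refine ⟨n+1, ?_⟩
    rw [word_succ, List.length_append, hn]
    omega
  | succ k ih =>
    obtain ⟨n, hkn⟩ := ih
    obtain ⟨n', hn'1, hn'2⟩ := hg n
    refine ⟨n'+1, ?_⟩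
    rw [word_succ, List.length_append, hn'2]
    have h1 : (word s n).length ≤ (word s n').length := (word_prefix s hn'1).length_le
    omega

lemma len_word_of_ne_one {s : ℕ → FreeMonoid W} (h1 : ∀ i, s i ≠ (1 : FreeMonoid W)) (k : ℕ) :
    ∃ n, k < (word s n).length := by
  refine ⟨k+1, ?_⟩
  have : ∀ n, n ≤ (word s n).length := by
    intro n
    induction n with
    | zero => exact Nat.zero_le _
    | succ n ih =>
      rw [word_succ, List.length_append]
      have : 0 < (FreeMonoid.toList (s n)).length := List.length_pos_iff.mpr (toList_ne_nil (h1 n))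
      omega
  have := this (k+1)
  omega

lemma F_blk [Nonempty W] {w : FreeMonoid W} (hw1 : w ≠ 1) {s : ℕ → FreeMonoid W}
    (hg : Good w s) : F (fun k => blkF w k s) = F s := by
  apply F_eq_F
  · intro n
    exact ⟨sgF w 0 n s, word_blkF hg n⟩
  · intro k
    obtain ⟨n, hn⟩ := len_word hw1 hg k
    refine ⟨n, ?_⟩
    rw [word_blkF hg]
    have h1 : (word s n).length ≤ (word s (sgF w 0 n s)).length :=
      (word_prefix s (idx_le_sgF hg 0 n)).length_le
    omega

lemma prod_eq_one_forall : ∀ {l : List (FreeMonoid W)}, l.prod = 1 → ∀ x ∈ l, x = 1 := by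
  intro l
  induction l with
  | nil => simp
  | cons hd tl ih =>
    intro h x hx
    rw [List.prod_cons] at h
    have h2 := congrArg FreeMonoid.toList h
    rw [FreeMonoid.toList_mul, FreeMonoid.toList_one] at h2
    obtain ⟨ha, hb⟩ := List.append_eq_nil_iff.mp h2
    have hhd : hd = 1 := FreeMonoid.toList.injective (ha.trans FreeMonoid.toList_one.symm)
    have htl : tl.prod = 1 := FreeMonoid.toList.injective (hb.trans FreeMonoid.toList_one.symm)
    rcases List.mem_cons.mp hx with rfl | hx
    · exact hhd
    · exact ih htl x hx

lemma isEmpty_Dec_one {w : FreeMonoid W} (hw1 : w ≠ 1) : IsEmpty (Dec w 1) := by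
  refine ⟨fun l => ?_⟩
  obtain ⟨lne, _, hlast, hprod⟩ := l.prop
  have hmem : w ∈ l.val := by
    rw [List.getLast?_eq_getLast lne] at hlast
    have := Option.some_injective _ hlast
    have hm2 := List.getLast_mem lne
    rwa [this] at hm2
  exact hw1 (prod_eq_one_forall hprod w hmem)

/-! ### measurability -/

lemma rangeMap_eq_ofFn {X : Type*} (f : ℕ → X) (n : ℕ) :
    (List.range n).map f = List.ofFn (fun i : Fin n => f (i : ℕ)) := by
  apply List.ext_getElem (by simp)
  intro i h1 h2
  simp

lemma measurableSet_dep {X : Type*} [MeasurableSpace X] [Countable X] [MeasurableSingletonClass X]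
    {n : ℕ} (e : Fin n → ℕ) (p : (Fin n → X) → Prop) :
    MeasurableSet {s : ℕ → X | p (fun i => s (e i))} := by
  have hmeas : Measurable (fun (s : ℕ → X) (i : Fin n) => s (e i)) :=
    measurable_pi_lambda _ fun i => measurable_pi_apply _
  exact hmeas ((Set.to_countable {f : Fin n → X | p f}).measurableSet)

lemma measurable_sInfP {X : Type*} [MeasurableSpace X] {p : ℕ → (ℕ → X) → Prop}
    (hp : ∀ n, MeasurableSet {s : ℕ → X | p n s}) :
    Measurable (fun s : ℕ → X => sInf {n | p n s}) := by
  apply measurable_to_countable'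
  intro i
  have hset : (fun s : ℕ → X => sInf {n | p n s}) ⁻¹' {i} =
      (({s | p i s} ∩ ⋂ j ∈ Finset.range i, {s | p j s}ᶜ) ∪
        ((⋂ n, {s | p n s}ᶜ) ∩ {s : ℕ → X | i = 0})) := by
    ext s
    simp only [Set.mem_preimage, Set.mem_singleton_iff, Set.mem_union, Set.mem_inter_iff,
      Set.mem_iInter, Set.mem_compl_iff, Set.mem_setOf_eq, Finset.mem_range]
    constructor
    · intro h
      by_cases hne : {n | p n s}.Nonempty
      · left
        have hmem := Nat.sInf_mem hne
        rw [h] at hmem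
        refine ⟨hmem, fun j hj hpj => ?_⟩
        have := Nat.sInf_le (s := {n | p n s}) hpj
        omega
      · right
        rw [Set.not_nonempty_iff_eq_empty] at hne
        constructor
        · intro n hn
          have : n ∈ {n | p n s} := hn
          rw [hne] at this
          exact this
        · rw [← h, hne, Nat.sInf_empty]
    · rintro (⟨hpi, hlt⟩ | ⟨hall, hi0⟩)
      · refine le_antisymm (Nat.sInf_le hpi) (le_csInf ⟨i, hpi⟩ ?_)
        intro n hn
        by_contra hc
        push_neg at hc
        exact hlt n (by omega) hn
      · have hemp : {n | p n s} = ∅ := by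
          ext n; simp only [Set.mem_setOf_eq, Set.mem_empty_iff_false, iff_false]
          exact hall n
        rw [hemp, Nat.sInf_empty, hi0]
  rw [hset]
  refine MeasurableSet.union ?_ ?_
  · exact (hp i).inter (MeasurableSet.biInter (Set.to_countable _) fun j _ => (hp j).compl)
  · refine (MeasurableSet.iInter fun n => (hp n).compl).inter ?_
    by_cases h : i = 0
    · simp [h]
    · simp [h]

lemma measurable_bind {X J α : Type*} [MeasurableSpace X] [Countable J] [MeasurableSpace J]
    [MeasurableSingletonClass J] [MeasurableSpace α] [Countable α] [MeasurableSingletonClass α]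
    {σ : (ℕ → X) → J} (hσ : Measurable σ) {f : J → (ℕ → X) → α} (hf : ∀ j, Measurable (f j)) :
    Measurable fun s => f (σ s) s := by
  apply measurable_to_countable'
  intro a
  have hset : (fun s => f (σ s) s) ⁻¹' {a} = ⋃ j : J, (σ ⁻¹' {j} ∩ f j ⁻¹' {a}) := by
    ext s
    simp only [Set.mem_preimage, Set.mem_singleton_iff, Set.mem_iUnion, Set.mem_inter_iff]
    constructor
    · intro h; exact ⟨σ s, rfl, h⟩
    · rintro ⟨j, hj, h⟩; rw [← hj] at h; exact h
  rw [hset]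
  exact MeasurableSet.iUnion fun j =>
    (hσ (measurableSet_singleton j)).inter (hf j (measurableSet_singleton a))

variable [Countable W]

lemma measurable_nxt (w : FreeMonoid W) (j : ℕ) : Measurable (fun s => nxt w j s) := by
  have h1 : Measurable (fun s : ℕ → FreeMonoid W => sInf {n | j ≤ n ∧ s n = w}) := by
    apply measurable_sInfP
    intro n
    by_cases h : j ≤ n
    · have : {s : ℕ → FreeMonoid W | j ≤ n ∧ s n = w} = (fun s : ℕ → FreeMonoid W => s n) ⁻¹' {w} := by
        ext s; simp [h]
      rw [this]
      exact measurable_pi_apply n (msFM _)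
    · have : {s : ℕ → FreeMonoid W | j ≤ n ∧ s n = w} = ∅ := by
        ext s; simp [h]
      rw [this]
      exact MeasurableSet.empty
  have h2 : Measurable (fun n : ℕ => n + 1) := measurable_from_top
  exact h2.comp h1

lemma measurable_sgF (w : FreeMonoid W) (j k : ℕ) : Measurable (fun s => sgF w j k s) := by
  induction k with
  | zero => exact measurable_const
  | succ k ih =>
    have : (fun s => sgF w j (k+1) s) = fun s => nxt w (sgF w j k s) s := by
      funext s; rw [sgF_succ]
    rw [this]
    exact measurable_bind ih (fun j' => measurable_nxt w j')

lemma measurable_segProd (j d : ℕ) :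
    Measurable (fun s : ℕ → FreeMonoid W => (seg j d s).prod) := by
  apply measurable_to_countable'
  intro a
  have hset : (fun s : ℕ → FreeMonoid W => (seg j d s).prod) ⁻¹' {a} =
      {s : ℕ → FreeMonoid W |
        (fun v : Fin d → FreeMonoid W => (List.ofFn v).prod = a) (fun i => s (j + (i : ℕ)))} := by
    ext s
    simp only [Set.mem_preimage, Set.mem_singleton_iff, Set.mem_setOf_eq, seg]
    rw [rangeMap_eq_ofFn (fun i => s (j + i)) d]
  rw [hset]
  exact measurableSet_dep (fun i : Fin d => j + (i : ℕ))
    (fun v : Fin d → FreeMonoid W => (List.ofFn v).prod = a)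

lemma measurable_blkF (w : FreeMonoid W) (k : ℕ) : Measurable (blkF w k) := by
  have : blkF w k = fun s =>
      (fun (jd : ℕ × ℕ) (s : ℕ → FreeMonoid W) => (seg jd.1 (jd.2 - jd.1) s).prod)
        ((fun s => (sgF w 0 k s, sgF w 0 (k+1) s)) s) s := rfl
  rw [this]
  exact measurable_bind (J := ℕ × ℕ) (α := FreeMonoid W)
    (σ := fun s => (sgF w 0 k s, sgF w 0 (k+1) s))
    (f := fun jd s => (seg jd.1 (jd.2 - jd.1) s).prod)
    ((measurable_sgF w 0 k).prodMk (measurable_sgF w 0 (k+1)))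
    (fun jd => measurable_segProd jd.1 (jd.2 - jd.1))

lemma measurableSet_Good (w : FreeMonoid W) : MeasurableSet {s : ℕ → FreeMonoid W | Good w s} := by
  have : {s : ℕ → FreeMonoid W | Good w s} =
      ⋂ m, ⋃ n, {s : ℕ → FreeMonoid W | m ≤ n ∧ s n = w} := by
    ext s
    simp only [Set.mem_setOf_eq, Set.mem_iInter, Set.mem_iUnion, Good]
  rw [this]
  refine MeasurableSet.iInter fun m => MeasurableSet.iUnion fun n => ?_
  by_cases h : m ≤ n
  · have : {s : ℕ → FreeMonoid W | m ≤ n ∧ s n = w} = (fun s : ℕ → FreeMonoid W => s n) ⁻¹' {w} := by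
      ext s; simp [h]
    rw [this]
    exact measurable_pi_apply n (msFM _)
  · have : {s : ℕ → FreeMonoid W | m ≤ n ∧ s n = w} = ∅ := by
      ext s; simp [h]
    rw [this]
    exact MeasurableSet.empty

/-! ### list product bridges -/

lemma list_getD_range {X : Type*} (L : List X) (d : X) :
    (List.range L.length).map (fun i => L.getD i d) = L := by
  apply List.ext_getElem (by simp)
  intro i h1 h2
  simp only [List.getElem_map, List.getElem_range]
  exact List.getD_eq_getElem L d h2

lemma finset_prod_range_eq_list_prod {M : Type*} [CommMonoid M] (n : ℕ) (f : ℕ → M) :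
    ∏ i ∈ Finset.range n, f i = ((List.range n).map f).prod := by
  induction n with
  | zero => simp
  | succ n ih => rw [Finset.prod_range_succ, List.range_succ]; simp [ih]

lemma prod_getD {X M : Type*} [CommMonoid M] (L : List X) (d : X) (f : X → M) :
    ∏ i ∈ Finset.range L.length, f (L.getD i d) = (L.map f).prod := by
  rw [finset_prod_range_eq_list_prod]
  rw [show (List.range L.length).map (fun i => f (L.getD i d))
      = ((List.range L.length).map (fun i => L.getD i d)).map f from by rw [List.map_map]; rfl]
  rw [list_getD_range]

/-! ### tsum over finite products -/

lemma tsum_pi_prod : ∀ (m : ℕ) (β : Fin m → Type u) (f : ∀ k, β k → ENNReal),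
    ∑' t : (∀ k, β k), ∏ k, f k (t k) = ∏ k, ∑' b, f k b := by
  intro m
  induction m with
  | zero =>
    intro β f
    rw [tsum_eq_single (fun k => k.elim0) (fun b hb =>
      absurd (funext fun k => k.elim0) (Ne.symm hb))]
    · simp
  | succ m ih =>
    intro β f
    rw [← Equiv.tsum_eq (Fin.consEquiv β) (fun t => ∏ k, f k (t k))]
    have h1 : ∀ p : β 0 × (∀ k : Fin m, β k.succ),
        (∏ k, f k ((Fin.consEquiv β p) k)) = f 0 p.1 * ∏ k : Fin m, f k.succ (p.2 k) := by
      intro p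
      rw [show Fin.consEquiv β p = Fin.cons p.1 p.2 from rfl, Fin.prod_univ_succ, Fin.cons_zero]
      simp only [Fin.cons_succ]
    calc ∑' p : β 0 × (∀ k : Fin m, β k.succ), ∏ k, f k ((Fin.consEquiv β p) k)
        = ∑' p : β 0 × (∀ k : Fin m, β k.succ), f 0 p.1 * ∏ k : Fin m, f k.succ (p.2 k) := by
          exact tsum_congr h1
      _ = ∑' (a : β 0), ∑' (b : ∀ k : Fin m, β k.succ), f 0 a * ∏ k : Fin m, f k.succ (b k) :=
          ENNReal.tsum_prod'
      _ = ∑' (a : β 0), f 0 a * ∑' (b : ∀ k : Fin m, β k.succ), ∏ k : Fin m, f k.succ (b k) := by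
          exact tsum_congr fun a => ENNReal.tsum_mul_left
      _ = (∑' (a : β 0), f 0 a) * ∑' (b : ∀ k : Fin m, β k.succ), ∏ k : Fin m, f k.succ (b k) :=
          ENNReal.tsum_mul_right
      _ = (∑' (a : β 0), f 0 a) * ∏ k : Fin m, ∑' b, f k.succ b := by
          rw [ih (fun k => β k.succ) (fun k => f k.succ)]
      _ = ∏ k, ∑' b, f k b := by
          rw [Fin.prod_univ_succ]

/-! ### extensionality for measures on sequence space via prefix cylinders -/

lemma measurableSet_prefixCyl {X : Type*} [MeasurableSpace X] [MeasurableSingletonClass X]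
    (m : ℕ) (a : ℕ → X) : MeasurableSet {s : ℕ → X | ∀ i < m, s i = a i} := by
  have : {s : ℕ → X | ∀ i < m, s i = a i} =
      ⋂ i ∈ Finset.range m, (fun s : ℕ → X => s i) ⁻¹' {a i} := by
    ext s; simp
  rw [this]
  exact MeasurableSet.biInter (Set.to_countable _)
    (fun i _ => measurable_pi_apply i (measurableSet_singleton _))

lemma measure_ext_of_prefix {X : Type*} [MeasurableSpace X] [Countable X]
    [MeasurableSingletonClass X] [Nonempty X]
    (ρ₁ ρ₂ : Measure (ℕ → X)) [IsProbabilityMeasure ρ₁] [IsProbabilityMeasure ρ₂]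
    (h : ∀ (m : ℕ) (a : ℕ → X),
      ρ₁ {s | ∀ i < m, s i = a i} = ρ₂ {s | ∀ i < m, s i = a i}) :
    ρ₁ = ρ₂ := by
  classical
  set C : Set (Set (ℕ → X)) := {S | ∃ (m : ℕ) (a : ℕ → X), S = {s : ℕ → X | ∀ i < m, s i = a i}} with hC
  have hpi : IsPiSystem C := by
    rintro S1 ⟨m1, a1, rfl⟩ S2 ⟨m2, a2, rfl⟩ hne
    obtain ⟨s0, hs1, hs2⟩ := hne
    simp only [Set.mem_setOf_eq] at hs1 hs2
    rcases le_total m1 m2 with hm | hm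
    · refine ⟨m2, a2, ?_⟩
      ext s
      simp only [Set.mem_inter_iff, Set.mem_setOf_eq]
      constructor
      · rintro ⟨_, h2⟩; exact h2
      · intro h2
        refine ⟨fun i hi => ?_, h2⟩
        rw [h2 i (by omega), ← hs2 i (by omega), hs1 i hi]
    · refine ⟨m1, a1, ?_⟩
      ext s
      simp only [Set.mem_inter_iff, Set.mem_setOf_eq]
      constructor
      · rintro ⟨h1, _⟩; exact h1
      · intro h1
        refine ⟨h1, fun i hi => ?_⟩
        rw [h1 i (by omega), ← hs1 i (by omega), hs2 i hi]
  have hgen : (MeasurableSpace.pi : MeasurableSpace (ℕ → X)) = MeasurableSpace.generateFrom C := by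
    apply le_antisymm
    · rw [MeasurableSpace.pi]
      apply iSup_le
      intro i
      intro S hS
      obtain ⟨t, _, rfl⟩ := hS
      have ht : (fun s : ℕ → X => s i) ⁻¹' t = ⋃ x ∈ t, (fun s : ℕ → X => s i) ⁻¹' {x} := by
        ext s; simp
      rw [ht]
      apply MeasurableSet.biUnion (Set.to_countable t)
      intro x _
      have hx : (fun s : ℕ → X => s i) ⁻¹' {x} =
          ⋃ b : {b : Fin (i+1) → X // b ⟨i, Nat.lt_succ_self i⟩ = x},
            {s : ℕ → X | ∀ j < i + 1,
              s j = (fun j' => if hj : j' < i + 1 then (b : Fin (i+1) → X) ⟨j', hj⟩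
                else Classical.arbitrary X) j} := by
        ext s
        simp only [Set.mem_preimage, Set.mem_singleton_iff, Set.mem_iUnion, Set.mem_setOf_eq]
        constructor
        · intro hs
          refine ⟨⟨fun j => s (j : ℕ), hs⟩, ?_⟩
          intro j hj
          simp [hj]
        · rintro ⟨b, hb⟩
          have := hb i (Nat.lt_succ_self i)
          simp only [Nat.lt_succ_self, dif_pos] at this
          rw [this]
          exact b.prop
      rw [hx]
      apply MeasurableSet.iUnion
      intro b
      apply MeasurableSpace.measurableSet_generateFrom
      exact ⟨i + 1, _, rfl⟩
    · apply MeasurableSpace.generateFrom_le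
      rintro S ⟨m, a, rfl⟩
      exact measurableSet_prefixCyl m a
  refine MeasureTheory.ext_of_generate_finite C hgen hpi ?_ ?_
  · rintro S ⟨m, a, rfl⟩
    exact h m a
  · simp

/-! ### probability lemmas -/

section Prob
variable {W : Type*} [Countable W]
variable {Ω : Type*} [MeasurableSpace Ω] (P : Measure Ω) [IsProbabilityMeasure P]
variable (μ : Measure (FreeMonoid W))
variable (g : ℕ → Ω → FreeMonoid W)

lemma law_apply (hgm : ∀ n, Measurable (g n)) (hlaw : ∀ n, Measure.map (g n) P = μ)
    (n : ℕ) (A : Set (FreeMonoid W)) : P (g n ⁻¹' A) = μ A := by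
  rw [← hlaw n, Measure.map_apply (hgm n) (msFM A)]

lemma shift_indep (hgm : ∀ n, Measurable (g n))
    (hindep : iIndepFun (m := fun _ => (⊤ : MeasurableSpace (FreeMonoid W))) g P)
    (hlaw : ∀ n, Measure.map (g n) P = μ)
    (c m : ℕ) (T : ℕ → Set (FreeMonoid W)) :
    P (⋂ i ∈ Finset.range m, g (i + c) ⁻¹' T i) = ∏ i ∈ Finset.range m, μ (T i) := by
  classical
  have h := hindep.measure_inter_preimage_eq_mul ((Finset.range m).image (· + c))
    (sets := fun j => T (j - c)) (fun i _ => MeasurableSpace.measurableSet_top)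
  have hL : (⋂ j ∈ (Finset.range m).image (· + c), g j ⁻¹' T (j - c))
      = ⋂ i ∈ Finset.range m, g (i + c) ⁻¹' T i := by
    ext ω
    simp only [Set.mem_iInter, Finset.mem_image, Finset.mem_range]
    constructor
    · intro hh i hi
      have := hh (i + c) ⟨i, hi, rfl⟩
      rwa [show i + c - c = i by omega] at this
    · rintro hh j ⟨i, hi, rfl⟩
      rw [show i + c - c = i by omega]
      exact hh i hi
  have hR : (∏ j ∈ (Finset.range m).image (· + c), P (g j ⁻¹' T (j - c)))
      = ∏ i ∈ Finset.range m, μ (T i) := by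
    rw [Finset.prod_image (by intro a _ b _ hab; simp only at hab; omega)]
    apply Finset.prod_congr rfl
    intro i _
    rw [show i + c - c = i by omega]
    exact law_apply P μ g hgm hlaw (i + c) (T i)
  rw [hL] at h
  rw [h, hR]

lemma good_ae (w : FreeMonoid W) (hw : 0 < μ {w}) (hgm : ∀ n, Measurable (g n))
    (hindep : iIndepFun (m := fun _ => (⊤ : MeasurableSpace (FreeMonoid W))) g P)
    (hlaw : ∀ n, Measure.map (g n) P = μ) :
    ∀ᵐ ω ∂P, Good w (fun n => g (n+1) ω) := by
  haveI : IsProbabilityMeasure μ := by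
    rw [← hlaw 0]; exact Measure.isProbabilityMeasure_map (hgm 0).aemeasurable
  have hTm : ∀ m : ℕ, P {ω | ∀ d, g (m + d + 1) ω ≠ w} = 0 := by
    intro m
    have hb : ∀ N, P {ω | ∀ d, g (m + d + 1) ω ≠ w} ≤ (1 - μ {w}) ^ N := by
      intro N
      have hsub : {ω | ∀ d, g (m + d + 1) ω ≠ w}
          ⊆ ⋂ i ∈ Finset.range N, g (i + (m + 1)) ⁻¹' ({w}ᶜ) := by
        intro ω hω
        simp only [Set.mem_iInter, Set.mem_preimage, Set.mem_compl_iff,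
          Set.mem_singleton_iff, Finset.mem_range]
        intro i _
        have := hω i
        rwa [show m + i + 1 = i + (m + 1) by omega] at this
      calc P {ω | ∀ d, g (m + d + 1) ω ≠ w}
          ≤ P (⋂ i ∈ Finset.range N, g (i + (m + 1)) ⁻¹' ({w}ᶜ)) := measure_mono hsub
        _ = ∏ _i ∈ Finset.range N, μ ({w}ᶜ) :=
            shift_indep P μ g hgm hindep hlaw (m+1) N (fun _ => {w}ᶜ)
        _ = (1 - μ {w}) ^ N := by
            rw [Finset.prod_const, Finset.card_range, prob_compl_eq_one_sub (msFM _)]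
    have hlt : (1 : ENNReal) - μ {w} < 1 :=
      ENNReal.sub_lt_self ENNReal.one_ne_top one_ne_zero hw.ne'
    have htend := ENNReal.tendsto_pow_atTop_nhds_zero_of_lt_one hlt
    have hle : P {ω | ∀ d, g (m + d + 1) ω ≠ w} ≤ 0 := ge_of_tendsto' htend hb
    exact le_antisymm hle zero_le
  have hsub2 : {ω | ¬ Good w (fun n => g (n+1) ω)} ⊆ ⋃ m, {ω | ∀ d, g (m + d + 1) ω ≠ w} := by
    intro ω hω
    simp only [Good, not_forall, Set.mem_setOf_eq] at hω
    obtain ⟨m, hm⟩ := hω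
    push_neg at hm
    refine Set.mem_iUnion.mpr ⟨m, ?_⟩
    intro d
    intro hc
    exact hm (m + d) (by omega) (by rwa [show m + d + 1 = m + d + 1 from rfl] at hc)
  rw [ae_iff]
  exact measure_mono_null hsub2 (measure_iUnion_null hTm)

lemma wt_cat {m : ℕ} (t : Fin m → List (FreeMonoid W)) (f : FreeMonoid W → ENNReal) :
    ((cat t).map f).prod = ∏ k, ((t k).map f).prod := by
  rw [cat, List.map_flatten, List.prod_flatten, List.map_ofFn, List.map_ofFn, List.prod_ofFn]
  rfl

lemma blockprob (w : FreeMonoid W) (hw : 0 < μ {w}) (hgm : ∀ n, Measurable (g n))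
    (hindep : iIndepFun (m := fun _ => (⊤ : MeasurableSpace (FreeMonoid W))) g P)
    (hlaw : ∀ n, Measure.map (g n) P = μ) (m : ℕ) (a : ℕ → FreeMonoid W) :
    P (⋂ k ∈ Finset.range m, (fun ω => blkF w k (fun n => g (n+1) ω)) ⁻¹' {a k})
      = ∏ k ∈ Finset.range m,
          ∑' l : Dec w (a k), ((l.val).map (fun u => μ {u})).prod := by
  classical
  set sq : Ω → (ℕ → FreeMonoid W) := fun ω n => g (n+1) ω with hsq
  set E := ⋂ k ∈ Finset.range m, (fun ω => blkF w k (sq ω)) ⁻¹' {a k} with hE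
  set G := {ω | Good w (sq ω)} with hG
  have hGm : MeasurableSet G := by
    have hGpre : G = sq ⁻¹' {s | Good w s} := rfl
    rw [hGpre]
    exact (measurable_pi_lambda sq (fun n => hgm (n+1))) (measurableSet_Good w)
  have hGc : P Gᶜ = 0 := by
    have hae := good_ae P μ g w hw hgm hindep hlaw
    rw [ae_iff] at hae
    exact hae
  set A : List (FreeMonoid W) → Set Ω :=
    fun L => ⋂ i ∈ Finset.range L.length, g (i+1) ⁻¹' {L.getD i 1} with hA
  have hAmem : ∀ (L : List (FreeMonoid W)) (ω : Ω), ω ∈ A L ↔ MatchAt 0 L (sq ω) := by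
    intro L ω
    simp only [hA, Set.mem_iInter, Set.mem_preimage, Set.mem_singleton_iff, Finset.mem_range]
    constructor
    · intro h i hi
      rw [Nat.zero_add]
      rw [show sq ω i = g (i+1) ω from rfl, h i hi]
      exact List.getD_eq_getElem L 1 hi
    · intro h i hi
      have h2 := h i hi
      rw [Nat.zero_add] at h2
      rw [show sq ω i = g (i+1) ω from rfl] at h2
      rw [h2]
      exact (List.getD_eq_getElem L 1 hi).symm
  have hPA : ∀ L : List (FreeMonoid W), P (A L) = (L.map (fun u => μ {u})).prod := by
    intro L
    rw [hA]
    rw [shift_indep P μ g hgm hindep hlaw 1 L.length (fun i => {L.getD i 1})]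
    exact prod_getD L 1 (fun u => μ {u})
  have hEU : E ∩ G = ⋃ t : (∀ k : Fin m, Dec w (a k)), (A (cat (fun k => (t k).val)) ∩ G) := by
    ext ω
    constructor
    · rintro ⟨hEω, hGω⟩
      have hgood : Good w (sq ω) := hGω
      obtain ⟨t, hDec, hMatch⟩ := forward m (sq ω) hgood
      rw [hE] at hEω
      simp only [Set.mem_iInter, Set.mem_preimage, Set.mem_singleton_iff,
        Finset.mem_range] at hEω
      have hblk : ∀ k : Fin m, blkF w (k : ℕ) (sq ω) = a (k : ℕ) :=
        fun k => hEω (k : ℕ) k.isLt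
      refine Set.mem_iUnion.mpr ⟨fun k => ⟨t k, ?_⟩, ?_, hGω⟩
      · rw [← hblk k]
        exact hDec k
      · exact (hAmem _ ω).mpr hMatch
    · intro hω
      obtain ⟨t, hA1, hGω⟩ := Set.mem_iUnion.mp hω
      refine ⟨?_, hGω⟩
      have hMatch := (hAmem _ ω).mp hA1
      have hback := back m 0 (sq ω) (fun k => (t k).val)
        (fun k => ⟨(t k).prop.1, (t k).prop.2.1, (t k).prop.2.2.1⟩) hMatch
      rw [hE]
      simp only [Set.mem_iInter, Set.mem_preimage, Set.mem_singleton_iff, Finset.mem_range]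
      intro k hk
      have hb := hback ⟨k, hk⟩
      have hval : blkF w k (sq ω) = ((t ⟨k, hk⟩).val).prod := by
        rw [blkF]
        rw [show sgF w 0 (k+1) (sq ω) = sgF w 0 k (sq ω) + ((t ⟨k, hk⟩).val).length from hb.1]
        rw [show sgF w 0 k (sq ω) + ((t ⟨k, hk⟩).val).length - sgF w 0 k (sq ω)
            = ((t ⟨k, hk⟩).val).length by omega]
        rw [hb.2]
      rw [hval]
      exact (t ⟨k, hk⟩).prop.2.2.2
  have hdisj : Pairwise (Function.onFun Disjoint
      (fun t : (∀ k : Fin m, Dec w (a k)) => A (cat (fun k => (t k).val)) ∩ G)) := by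
    intro t1 t2 hne
    rw [Function.onFun, Set.disjoint_left]
    rintro ω ⟨hA1, hG1⟩ ⟨hA2, _⟩
    apply hne
    have hb1 := back m 0 (sq ω) (fun k => (t1 k).val)
      (fun k => ⟨(t1 k).prop.1, (t1 k).prop.2.1, (t1 k).prop.2.2.1⟩) ((hAmem _ ω).mp hA1)
    have hb2 := back m 0 (sq ω) (fun k => (t2 k).val)
      (fun k => ⟨(t2 k).prop.1, (t2 k).prop.2.1, (t2 k).prop.2.2.1⟩) ((hAmem _ ω).mp hA2)
    funext k
    apply Subtype.ext
    have e1 : sgF w 0 ((k:ℕ)+1) (sq ω) = sgF w 0 (k:ℕ) (sq ω) + ((t1 k).val).length := (hb1 k).1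
    have e2 : sgF w 0 ((k:ℕ)+1) (sq ω) = sgF w 0 (k:ℕ) (sq ω) + ((t2 k).val).length := (hb2 k).1
    have s1 : seg (sgF w 0 (k:ℕ) (sq ω)) ((t1 k).val).length (sq ω) = (t1 k).val := (hb1 k).2
    have s2 : seg (sgF w 0 (k:ℕ) (sq ω)) ((t2 k).val).length (sq ω) = (t2 k).val := (hb2 k).2
    have hlen : ((t1 k).val).length = ((t2 k).val).length := by omega
    rw [← s1, ← s2, hlen]
  have hAm : ∀ L : List (FreeMonoid W), MeasurableSet (A L) := fun L =>
    MeasurableSet.biInter (Set.to_countable _) (fun i _ => (hgm (i+1)) (msFM _))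
  have hcount : ∀ S : Set Ω, P (S ∩ G) = P S := by
    intro S
    apply le_antisymm (measure_mono Set.inter_subset_left)
    calc P S = P ((S ∩ G) ∪ (S ∩ Gᶜ)) := by rw [Set.inter_union_compl]
      _ ≤ P (S ∩ G) + P (S ∩ Gᶜ) := measure_union_le _ _
      _ ≤ P (S ∩ G) + 0 := add_le_add_right (le_of_eq (measure_mono_null Set.inter_subset_right hGc)) _
      _ = P (S ∩ G) := add_zero _
  have hEfin : P E = P (E ∩ G) := (hcount E).symm
  rw [show P (⋂ k ∈ Finset.range m, (fun ω => blkF w k (fun n => g (n+1) ω)) ⁻¹' {a k}) = P E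
    from rfl]
  rw [hEfin, hEU, measure_iUnion hdisj (fun t => (hAm _).inter hGm)]
  have hPt : ∀ t : (∀ k : Fin m, Dec w (a k)),
      P (A (cat (fun k => (t k).val)) ∩ G)
        = ∏ k : Fin m, (((t k).val).map (fun u => μ {u})).prod := by
    intro t
    rw [hcount, hPA, wt_cat]
  rw [tsum_congr hPt]
  rw [tsum_pi_prod m (fun k => Dec w (a (k : ℕ)))
    (fun k l => ((l.val).map (fun u => μ {u})).prod)]
  exact Fin.prod_univ_eq_prod_range
    (fun k => ∑' l : Dec w (a k), ((l.val).map (fun u => μ {u})).prod) m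

end Prob

/-! ### measurability of F, and bridges -/

lemma measurable_F {W : Type*} [Nonempty W] [Countable W] [MeasurableSpace W]
    [MeasurableSingletonClass W] : Measurable (F : (ℕ → FreeMonoid W) → ℕ → W) := by
  classical
  apply measurable_pi_lambda
  intro k
  apply measurable_to_countable'
  intro a
  set Q : List W → Prop := fun L => ∃ h : k < L.length, L[k]'h = a with hQdef
  set R : List W → Prop := fun L => ¬ k < L.length with hRdef
  have hset : (fun s : ℕ → FreeMonoid W => F s k) ⁻¹' {a} =
      (⋃ n, {s : ℕ → FreeMonoid W | Q (word s n)})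
      ∪ ((⋂ n, {s : ℕ → FreeMonoid W | R (word s n)})
          ∩ {s : ℕ → FreeMonoid W | Classical.arbitrary W = a}) := by
    ext s
    simp only [Set.mem_preimage, Set.mem_singleton_iff, Set.mem_union, Set.mem_iUnion,
      Set.mem_iInter, Set.mem_setOf_eq, Set.mem_inter_iff, hQdef, hRdef]
    constructor
    · intro h
      by_cases hex : ∃ n, k < (word s n).length
      · obtain ⟨n, hn⟩ := hex
        left
        exact ⟨n, hn, by rw [← F_eq hn]; exact h⟩
      · right
        push_neg at hex
        refine ⟨fun n => by have := hex n; omega, ?_⟩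
        rw [← h, F, dif_neg (by push_neg; exact fun n => by have := hex n; omega)]
    · rintro (⟨n, hn, hval⟩ | ⟨hall, harb⟩)
      · rw [F_eq hn]; exact hval
      · rw [F, dif_neg (by push_neg; exact fun n => by have := hall n; omega)]
        exact harb
  rw [hset]
  have hword : ∀ (s : ℕ → FreeMonoid W) (n : ℕ),
      word s n = FreeMonoid.toList ((List.ofFn (fun i : Fin n => s (i : ℕ))).prod) :=
    fun s n => by rw [word, rangeMap_eq_ofFn]
  refine MeasurableSet.union ?_ ?_
  · apply MeasurableSet.iUnion
    intro n
    have heq : {s : ℕ → FreeMonoid W | Q (word s n)} =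
        {s : ℕ → FreeMonoid W | (fun v : Fin n → FreeMonoid W =>
          Q (FreeMonoid.toList ((List.ofFn v).prod))) (fun i => s (i : ℕ))} := by
      ext s
      simp only [Set.mem_setOf_eq]
      rw [hword s n]
    rw [heq]
    exact measurableSet_dep (fun i : Fin n => (i : ℕ))
      (fun v : Fin n → FreeMonoid W => Q (FreeMonoid.toList ((List.ofFn v).prod)))
  · refine MeasurableSet.inter ?_ ?_
    · apply MeasurableSet.iInter
      intro n
      have heq : {s : ℕ → FreeMonoid W | R (word s n)} =
          {s : ℕ → FreeMonoid W | (fun v : Fin n → FreeMonoid W =>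
            R (FreeMonoid.toList ((List.ofFn v).prod))) (fun i => s (i : ℕ))} := by
        ext s
        simp only [Set.mem_setOf_eq]
        rw [hword s n]
      rw [heq]
      exact measurableSet_dep (fun i : Fin n => (i : ℕ))
        (fun v : Fin n → FreeMonoid W => R (FreeMonoid.toList ((List.ofFn v).prod)))
    · by_cases h : Classical.arbitrary W = a
      · have : {s : ℕ → FreeMonoid W | Classical.arbitrary W = a} = Set.univ := by
          ext s; simp [h]
        rw [this]; exact MeasurableSet.univ
      · have : {s : ℕ → FreeMonoid W | Classical.arbitrary W = a} = ∅ := by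
          ext s; simp [h]
        rw [this]; exact MeasurableSet.empty

lemma prefix_bridge {W Ω : Type*} [Nonempty W] (g : ℕ → Ω → FreeMonoid W) (ω : Ω) (φ : ℕ → W)
    (hpre : ∀ n, IsPrefixOf (pos g n ω) φ)
    (hlen : ∀ k, ∃ n, k < (word (fun n => g n ω) n).length) :
    φ = F (fun n => g n ω) := by
  apply eq_F_of_prefixes hlen
  intro n i h
  have h' : i < (FreeMonoid.toList (pos g n ω)).length := h
  have hpg := hpre n ⟨i, h'⟩
  rw [List.get_eq_getElem] at hpg
  exact hpg

lemma xtau_pure {W : Type*} {w : FreeMonoid W} (s0 : ℕ → FreeMonoid W)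
    (hg : Good w (fun n => s0 (n+1))) :
    ((List.range (sInf {n | 1 ≤ n ∧ s0 n = w})).map (fun i => s0 (i+1))).prod
      = blkF w 0 (fun n => s0 (n+1)) := by
  set s : ℕ → FreeMonoid W := fun n => s0 (n+1) with hs
  have hne : {n | 0 ≤ n ∧ s n = w}.Nonempty := by
    obtain ⟨n, _, h⟩ := hg 0; exact ⟨n, Nat.zero_le n, h⟩
  set i0 := sInf {n | 0 ≤ n ∧ s n = w} with hi0
  have hmem := Nat.sInf_mem hne
  have hτ : sInf {n | 1 ≤ n ∧ s0 n = w} = i0 + 1 := by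
    apply le_antisymm
    · apply Nat.sInf_le
      exact ⟨by omega, hmem.2⟩
    · have hmem1 : (i0 + 1) ∈ {n | 1 ≤ n ∧ s0 n = w} := ⟨by omega, hmem.2⟩
      apply le_csInf ⟨i0 + 1, hmem1⟩
      rintro b ⟨hb1, hb2⟩
      have hbm : b - 1 ∈ {n | 0 ≤ n ∧ s n = w} := by
        refine ⟨Nat.zero_le _, ?_⟩
        show s0 (b - 1 + 1) = w
        rw [show b - 1 + 1 = b by omega]
        exact hb2
      have := Nat.sInf_le hbm
      omega
  rw [hτ, blkF]
  have h00 : sgF w 0 0 s = 0 := rfl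
  have h01 : sgF w 0 (0+1) s = nxt w 0 s := rfl
  have hnxt : nxt w 0 s = i0 + 1 := by
    rw [nxt, ← hi0]
  rw [h00, h01, hnxt]
  rw [show i0 + 1 - 0 = i0 + 1 from rfl]
  congr 1
  rw [seg]
  apply List.ext_getElem (by simp)
  intro i h1 h2
  simp only [List.getElem_map, List.getElem_range]
  show s0 (i + 1) = s (0 + i)
  rw [Nat.zero_add]

end Core


theorem hitting_measure_eq_hitting_measure_of_first_return
    {W : Type*} [Countable W] [Nonempty W]
    [MeasurableSpace W] [MeasurableSingletonClass W]
    (μ : Measure (FreeMonoid W)) [IsProbabilityMeasure μ]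
    (w : FreeMonoid W) (hw1 : w ≠ 1) (hw : 0 < μ {w})
    -- the random walk with step distribution `μ`
    {Ω : Type*} [MeasurableSpace Ω] (P : Measure Ω) [IsProbabilityMeasure P]
    (g : ℕ → Ω → FreeMonoid W) (hgm : ∀ n, Measurable (g n))
    (hindep : iIndepFun (m := fun _ => (⊤ : MeasurableSpace (FreeMonoid W))) g P)
    (hlaw : ∀ n, Measure.map (g n) P = μ)
    (Φ : Ω → ℕ → W) (hΦm : Measurable Φ)
    (hΦ : ∀ᵐ ω ∂P, ∀ n, IsPrefixOf (pos g n ω) (Φ ω))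
    -- the first return word `x_{τ_w}` and its law `μ_w`
    (xτ : Ω → FreeMonoid W)
    (hxτ : ∀ ω, xτ ω =
      ((List.range (sInf {n : ℕ | 1 ≤ n ∧ g n ω = w})).map (fun i => g (i + 1) ω)).prod)
    -- the random walk with step distribution `μ_w = Measure.map xτ P`
    {Ω' : Type*} [MeasurableSpace Ω'] (P' : Measure Ω') [IsProbabilityMeasure P']
    (g' : ℕ → Ω' → FreeMonoid W) (hgm' : ∀ n, Measurable (g' n))
    (hindep' : iIndepFun (m := fun _ => (⊤ : MeasurableSpace (FreeMonoid W))) g' P')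
    (hlaw' : ∀ n, Measure.map (g' n) P' = Measure.map xτ P)
    (Φ' : Ω' → ℕ → W) (hΦm' : Measurable Φ')
    (hΦ' : ∀ᵐ ω ∂P', ∀ n, IsPrefixOf (pos g' n ω) (Φ' ω)) :
    Measure.map Φ P = Measure.map Φ' P' := by
  classical
  haveI hnex : Nonempty (FreeMonoid W) := ⟨1⟩
  set μw := Measure.map xτ P with hμw
  have msq0 : Measurable (fun ω (n : ℕ) => g n ω) :=
    measurable_pi_lambda _ fun n => hgm n
  have msq : Measurable (fun ω (n : ℕ) => g (n+1) ω) :=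
    measurable_pi_lambda _ fun n => hgm (n+1)
  have msq0' : Measurable (fun ω' (n : ℕ) => g' n ω') :=
    measurable_pi_lambda _ fun n => hgm' n
  have mBs : Measurable (fun ω (k : ℕ) => blkF w k (fun n => g (n+1) ω)) :=
    measurable_pi_lambda _ fun k => (measurable_blkF w k).comp msq
  have mF : Measurable (F : (ℕ → FreeMonoid W) → ℕ → W) := measurable_F
  have hGae : ∀ᵐ ω ∂P, Good w (fun n => g (n+1) ω) := good_ae P μ g w hw hgm hindep hlaw
  -- step A
  have hstepA : Measure.map Φ P = Measure.map (fun ω => F (fun n => g n ω)) P := by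
    apply Measure.map_congr
    filter_upwards [hΦ, hGae] with ω hpre hgood
    have hgood0 : Good w (fun n => g n ω) := by
      intro m
      obtain ⟨n, hn, h⟩ := hgood m
      exact ⟨n+1, by omega, h⟩
    exact prefix_bridge g ω (Φ ω) hpre (len_word hw1 hgood0)
  -- law eq 1
  have hlaw1 : Measure.map (fun ω (n : ℕ) => g n ω) P
      = Measure.map (fun ω (n : ℕ) => g (n+1) ω) P := by
    haveI := Measure.isProbabilityMeasure_map (μ := P) msq0.aemeasurable
    haveI := Measure.isProbabilityMeasure_map (μ := P) msq.aemeasurable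
    refine measure_ext_of_prefix (Measure.map (fun ω (n : ℕ) => g n ω) P)
      (Measure.map (fun ω (n : ℕ) => g (n+1) ω) P) fun m a => ?_
    rw [Measure.map_apply msq0 (measurableSet_prefixCyl m a),
        Measure.map_apply msq (measurableSet_prefixCyl m a)]
    have h0 : (fun ω (n : ℕ) => g n ω) ⁻¹' {s | ∀ i < m, s i = a i}
        = ⋂ i ∈ Finset.range m, g (i + 0) ⁻¹' {a i} := by
      ext ω
      simp
    have h1 : (fun ω (n : ℕ) => g (n+1) ω) ⁻¹' {s | ∀ i < m, s i = a i}
        = ⋂ i ∈ Finset.range m, g (i + 1) ⁻¹' {a i} := by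
      ext ω
      simp
    rw [h0, h1, shift_indep P μ g hgm hindep hlaw 0 m (fun i => {a i}),
      shift_indep P μ g hgm hindep hlaw 1 m (fun i => {a i})]
  -- step C
  have hstepC : Measure.map (fun ω => F (fun n => g (n+1) ω)) P
      = Measure.map (fun ω => F (fun k => blkF w k (fun n => g (n+1) ω))) P := by
    apply Measure.map_congr
    filter_upwards [hGae] with ω hgood
    exact (F_blk hw1 hgood).symm
  -- identification of the first-return word with the first block
  have hxτae : xτ =ᵐ[P] (fun ω => blkF w 0 (fun n => g (n+1) ω)) := by
    filter_upwards [hGae] with ω hgood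
    rw [hxτ ω]
    exact xtau_pure (fun n => g n ω) hgood
  have hBmeas0 : Measurable (fun ω => blkF w 0 (fun n => g (n+1) ω)) :=
    (measurable_blkF w 0).comp msq
  have hmapxτ : μw = Measure.map (fun ω => blkF w 0 (fun n => g (n+1) ω)) P := by
    rw [hμw]; exact Measure.map_congr hxτae
  have hc : ∀ b : FreeMonoid W,
      μw {b} = ∑' l : Dec w b, ((l.val).map (fun u => μ {u})).prod := by
    intro b
    rw [hmapxτ, Measure.map_apply hBmeas0 (msFM _)]
    have hbp := blockprob P μ g w hw hgm hindep hlaw 1 (fun _ => b)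
    have h1 : (⋂ k ∈ Finset.range 1,
        (fun ω => blkF w k (fun n => g (n+1) ω)) ⁻¹' {(fun _ : ℕ => b) k})
        = (fun ω => blkF w 0 (fun n => g (n+1) ω)) ⁻¹' {b} := by
      ext ω
      simp [Nat.lt_one_iff]
    rw [h1, Finset.prod_range_one] at hbp
    exact hbp
  -- law eq 2
  have hlaw2 : Measure.map (fun ω (k : ℕ) => blkF w k (fun n => g (n+1) ω)) P
      = Measure.map (fun ω' (n : ℕ) => g' n ω') P' := by
    haveI := Measure.isProbabilityMeasure_map (μ := P) mBs.aemeasurable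
    haveI := Measure.isProbabilityMeasure_map (μ := P') msq0'.aemeasurable
    refine measure_ext_of_prefix (Measure.map (fun ω (k : ℕ) => blkF w k (fun n => g (n+1) ω)) P)
      (Measure.map (fun ω' (n : ℕ) => g' n ω') P') fun m a => ?_
    rw [Measure.map_apply mBs (measurableSet_prefixCyl m a),
        Measure.map_apply msq0' (measurableSet_prefixCyl m a)]
    have hL : (fun ω (k : ℕ) => blkF w k (fun n => g (n+1) ω)) ⁻¹' {s | ∀ i < m, s i = a i}
        = ⋂ k ∈ Finset.range m, (fun ω => blkF w k (fun n => g (n+1) ω)) ⁻¹' {a k} := by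
      ext ω
      simp
    have hR : (fun ω' (n : ℕ) => g' n ω') ⁻¹' {s | ∀ i < m, s i = a i}
        = ⋂ k ∈ Finset.range m, g' (k + 0) ⁻¹' {a k} := by
      ext ω'
      simp
    rw [hL, hR, blockprob P μ g w hw hgm hindep hlaw m a,
      shift_indep P' μw g' hgm' hindep' hlaw' 0 m (fun k => {a k})]
    exact Finset.prod_congr rfl fun k _ => (hc (a k)).symm
  -- walk 2 increments are a.s. nonempty words
  have h1' : ∀ᵐ ω' ∂P', ∀ n, g' n ω' ≠ 1 := by
    have hz : ∀ n, P' (g' n ⁻¹' {1}) = 0 := by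
      intro n
      rw [law_apply P' μw g' hgm' hlaw' n {1}, hc 1]
      haveI := isEmpty_Dec_one (w := w) hw1
      exact tsum_empty
    rw [ae_iff]
    apply measure_mono_null ?_ (measure_iUnion_null hz)
    intro ω' hω'
    simp only [Set.mem_setOf_eq, not_forall, not_not] at hω'
    obtain ⟨n, hn⟩ := hω'
    exact Set.mem_iUnion.mpr ⟨n, hn⟩
  have hstepE : Measure.map (fun ω' => F (fun n => g' n ω')) P' = Measure.map Φ' P' := by
    apply Measure.map_congr
    filter_upwards [hΦ', h1'] with ω' hpre hne1
    exact (prefix_bridge g' ω' (Φ' ω') hpre (len_word_of_ne_one hne1)).symm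
  calc Measure.map Φ P
      = Measure.map (fun ω => F (fun n => g n ω)) P := hstepA
    _ = Measure.map F (Measure.map (fun ω (n : ℕ) => g n ω) P) :=
        (Measure.map_map mF msq0).symm
    _ = Measure.map F (Measure.map (fun ω (n : ℕ) => g (n+1) ω) P) := by rw [hlaw1]
    _ = Measure.map (fun ω => F (fun n => g (n+1) ω)) P := Measure.map_map mF msq
    _ = Measure.map (fun ω => F (fun k => blkF w k (fun n => g (n+1) ω))) P := hstepC
    _ = Measure.map F (Measure.map (fun ω (k : ℕ) => blkF w k (fun n => g (n+1) ω)) P) :=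
        (Measure.map_map mF mBs).symm
    _ = Measure.map F (Measure.map (fun ω' (n : ℕ) => g' n ω') P') := by rw [hlaw2]
    _ = Measure.map (fun ω' => F (fun n => g' n ω')) P' := Measure.map_map mF msq0'
    _ = Measure.map Φ' P' := hstepE

end Stmt15
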